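/- Let r be a natural number, s : {1,…,r} → ℂ, n ∈ ℂ, k ∈ ℤ, and let z be a complex number such that z − n − 1/2 is not an integer. For j ∈ ℤ define Ψ_j(z) := Σ_{m : {1,…,r} → ℕ} ( ∏_{i=1}^{r} s_i^{m_i} / m_i! ) · Γ( z + j − n − 1/2 − Σ_{i=1}^{r} i·m_i ) (each sum converges absolutely). Then Ψ_k(z) + (n + 1/2 − z)·Ψ_{k−1}(z) + Σ_{i=1}^{r} i·s_i·Ψ_{k−1−i}(z) = (k − 1)·Ψ_{k−1}(z). -/

import Mathlib

open Complex Function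

/-- Γ(a-N) is uniformly bounded over N when a is never an integer. -/
lemma gammaBdd (a : ℂ) (ha : ∀ t : ℤ, a ≠ t) :
    ∃ C : ℝ, ∀ N : ℕ, ‖Complex.Gamma (a - N)‖ ≤ C := by
  set N0 := ⌈a.re⌉.toNat with hN0
  refine ⟨∑ j ∈ Finset.range (N0 + 1), ‖Complex.Gamma (a - j)‖, ?_⟩
  have hre : a.re ≤ (N0 : ℝ) := by
    have h1 : a.re ≤ (⌈a.re⌉ : ℝ) := Int.le_ceil _
    have h2 : (⌈a.re⌉ : ℝ) ≤ ((⌈a.re⌉.toNat : ℤ) : ℝ) := by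
      exact_mod_cast Int.self_le_toNat _
    have h3 : ((⌈a.re⌉.toNat : ℤ) : ℝ) = (N0 : ℝ) := by rw [hN0]; push_cast; ring
    linarith
  intro N
  induction N with
  | zero =>
    exact Finset.single_le_sum (f := fun j : ℕ => ‖Complex.Gamma (a - j)‖)
      (fun _ _ => norm_nonneg _)
      (show (0:ℕ) ∈ Finset.range (N0 + 1) from Finset.mem_range.mpr (by omega))
  | succ M ih =>
    by_cases h : M + 1 ≤ N0
    · exact Finset.single_le_sum (f := fun j : ℕ => ‖Complex.Gamma (a - j)‖)
        (fun _ _ => norm_nonneg _)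
        (show M + 1 ∈ Finset.range (N0 + 1) from Finset.mem_range.mpr (by omega))
    · have hM : N0 ≤ M := by omega
      have hne : a - ((M : ℕ) + 1 : ℂ) ≠ 0 := by
        intro h0
        exact ha ((M : ℤ) + 1) (by push_cast [sub_eq_zero] at h0 ⊢; exact h0)
      have hrec : Complex.Gamma (a - M) = (a - (M + 1)) * Complex.Gamma (a - (M + 1)) := by
        have := Complex.Gamma_add_one (a - ((M : ℂ) + 1)) hne
        rw [show a - ((M : ℂ) + 1) + 1 = a - M by ring] at this
        exact this
      have hge : (1 : ℝ) ≤ ‖a - ((M : ℂ) + 1)‖ := by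
        have h1 : |(a - ((M : ℂ) + 1)).re| ≤ ‖a - ((M : ℂ) + 1)‖ := Complex.abs_re_le_norm _
        have h2 : (a - ((M : ℂ) + 1)).re = a.re - (M + 1) := by simp
        have h3 : (N0 : ℝ) ≤ (M : ℝ) := by exact_mod_cast hM
        have : (1 : ℝ) ≤ |a.re - ((M : ℝ) + 1)| := by
          rw [abs_sub_comm, le_abs]
          left; linarith
        calc (1:ℝ) ≤ |(a - ((M : ℂ) + 1)).re| := by rw [h2]; exact this
          _ ≤ _ := h1
      calc ‖Complex.Gamma (a - ((M + 1 : ℕ) : ℂ))‖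
          ≤ ‖a - ((M : ℂ) + 1)‖ * ‖Complex.Gamma (a - ((M + 1 : ℕ) : ℂ))‖ := by
            nlinarith [norm_nonneg (Complex.Gamma (a - ((M + 1 : ℕ) : ℂ)))]
        _ = ‖Complex.Gamma (a - M)‖ := by
            rw [hrec]; push_cast; rw [norm_mul]
        _ ≤ _ := ih

/-- Summability of products of exponential-type series over `Fin r → ℕ`. -/
lemma Psummable (r : ℕ) (c : Fin r → ℝ) (hc : ∀ i, 0 ≤ c i) :
    Summable (fun m : Fin r → ℕ => ∏ i, c i ^ m i / (m i).factorial) := by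
  induction r with
  | zero => exact .of_finite
  | succ r ih =>
    have h1 : Summable (fun x : ℕ => c 0 ^ x / x.factorial) :=
      Real.summable_pow_div_factorial _
    have h2 := ih (fun i => c i.succ) (fun i => hc _)
    have h3 := Summable.mul_of_nonneg h1 h2
      (fun x => by have := hc 0; positivity)
      (fun p => Finset.prod_nonneg fun i _ => by have := hc i.succ; positivity)
    rw [← (Fin.consEquiv (fun _ : Fin (r + 1) => ℕ)).summable_iff]
    refine h3.congr fun p => ?_
    simp only [Function.comp, Fin.consEquiv_apply, Fin.prod_univ_succ, Fin.cons_zero,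
      Fin.cons_succ]

/-- The Ψ-series summand is summable. -/
lemma summandSummable (r : ℕ) (s : Fin r → ℂ) (a : ℂ) (ha : ∀ t : ℤ, a ≠ t) :
    Summable (fun m : Fin r → ℕ =>
      (∏ i, s i ^ m i / ((m i).factorial : ℂ)) *
        Complex.Gamma (a - ((∑ i, (i.val + 1) * m i : ℕ) : ℂ))) := by
  obtain ⟨C, hC⟩ := gammaBdd a ha
  have hC0 : 0 ≤ C := (norm_nonneg _).trans (hC 0)
  refine Summable.of_norm_bounded
    (g := fun m => (∏ i, ‖s i‖ ^ m i / (m i).factorial) * C)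
    ((Psummable r (fun i => ‖s i‖) (fun i => norm_nonneg _)).mul_right C) ?_
  intro m
  rw [norm_mul]
  have h1 : ‖∏ i, s i ^ m i / ((m i).factorial : ℂ)‖
      = ∏ i, ‖s i‖ ^ m i / (m i).factorial := by
    rw [norm_prod]
    refine Finset.prod_congr rfl fun i _ => ?_
    rw [norm_div, norm_pow]
    norm_num
  rw [h1]
  exact mul_le_mul_of_nonneg_left (hC _)
    (Finset.prod_nonneg fun i _ => by positivity)

/-- Reindexing: the weighted sum equals a shifted Ψ-series. -/
lemma reindexSum (r : ℕ) (s : Fin r → ℂ) (b : ℂ) (i : Fin r) :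
    (∑' m : Fin r → ℕ, (((i.val + 1) * m i : ℕ) : ℂ) *
        ((∏ j, s j ^ m j / ((m j).factorial : ℂ)) *
          Complex.Gamma (b - ((∑ j, (j.val + 1) * m j : ℕ) : ℂ))))
      = ((i.val + 1 : ℕ) : ℂ) * s i *
        ∑' m : Fin r → ℕ, (∏ j, s j ^ m j / ((m j).factorial : ℂ)) *
          Complex.Gamma (b - ((i.val + 1 : ℕ) : ℂ) - ((∑ j, (j.val + 1) * m j : ℕ) : ℂ)) := by
  classical
  set F : (Fin r → ℕ) → ℂ := fun m =>
    (((i.val + 1) * m i : ℕ) : ℂ) *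
      ((∏ j, s j ^ m j / ((m j).factorial : ℂ)) *
        Complex.Gamma (b - ((∑ j, (j.val + 1) * m j : ℕ) : ℂ))) with hF
  set e : (Fin r → ℕ) → (Fin r → ℕ) := fun m => Function.update m i (m i + 1) with he
  have heapp : ∀ (x : Fin r → ℕ) (j : Fin r), e x j = x j + if j = i then 1 else 0 := by
    intro x j
    by_cases h : j = i
    · subst h; simp [he]
    · simp [he, Function.update_of_ne h, h]

  have hinj : Function.Injective e := by
    intro x y hxy
    funext j
    have hj := congrFun hxy j
    by_cases h : j = i
    · subst h; simp only [he, Function.update_self] at hj; omega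
    · simpa [he, Function.update_of_ne h] using hj
  have hvanish : ∀ m : Fin r → ℕ, m ∉ Set.range e → F m = 0 := by
    intro m hm
    have hmi : m i = 0 := by
      by_contra h
      exact hm ⟨Function.update m i (m i - 1), by
        funext j
        by_cases hji : j = i
        · subst hji; simp [he, Function.update_self]; omega
        · simp [he, Function.update_of_ne hji]⟩
    simp [hF, hmi]
  have hTe : ∀ x : Fin r → ℕ, (∑ j, (j.val + 1) * e x j) = (∑ j, (j.val + 1) * x j) + (i.val + 1) := by
    intro x
    have : ∀ j : Fin r, (j.val + 1) * e x j
        = (j.val + 1) * x j + if j = i then j.val + 1 else 0 := by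
      intro j; rw [heapp]; by_cases h : j = i <;> (simp [h]; try ring)
    rw [Finset.sum_congr rfl (fun j _ => this j), Finset.sum_add_distrib,
      Finset.sum_ite_eq' Finset.univ i (fun j => j.val + 1)]
    simp
  have hCe : ∀ x : Fin r → ℕ,
      (∏ j, s j ^ e x j / ((e x j).factorial : ℂ))
        = (s i / ((x i : ℂ) + 1)) * ∏ j, s j ^ x j / ((x j).factorial : ℂ) := by
    intro x
    rw [← Finset.mul_prod_erase Finset.univ _ (Finset.mem_univ i),
        ← Finset.mul_prod_erase Finset.univ
          (fun j => s j ^ x j / ((x j).factorial : ℂ)) (Finset.mem_univ i)]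
    have herase : ∀ j ∈ Finset.univ.erase i,
        s j ^ e x j / ((e x j).factorial : ℂ) = s j ^ x j / ((x j).factorial : ℂ) := by
      intro j hj
      rw [heapp, if_neg (Finset.mem_erase.mp hj).1, Nat.add_zero]
    rw [Finset.prod_congr rfl herase]
    have : e x i = x i + 1 := by rw [heapp]; simp
    rw [this, pow_succ, Nat.factorial_succ]
    have h1 : ((x i).factorial : ℂ) ≠ 0 := Nat.cast_ne_zero.mpr (Nat.factorial_ne_zero _)
    have h2 : ((x i : ℂ) + 1) ≠ 0 := Nat.cast_add_one_ne_zero (x i)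
    generalize (∏ j ∈ Finset.univ.erase i, s j ^ x j / ((x j).factorial : ℂ)) = R
    push_cast
    field_simp
  have key : ∀ x : Fin r → ℕ, F (e x)
      = (((i.val + 1 : ℕ) : ℂ) * s i) *
        ((∏ j, s j ^ x j / ((x j).factorial : ℂ)) *
          Complex.Gamma (b - ((i.val + 1 : ℕ) : ℂ) - ((∑ j, (j.val + 1) * x j : ℕ) : ℂ))) := by
    intro x
    have hexi : e x i = x i + 1 := by rw [heapp]; simp
    rw [hF]
    simp only [hTe x, hCe x, hexi]
    have hΓ : (b - (((∑ j, (j.val + 1) * x j) + (i.val + 1) : ℕ) : ℂ))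
        = b - ((i.val + 1 : ℕ) : ℂ) - ((∑ j, (j.val + 1) * x j : ℕ) : ℂ) := by
      push_cast; ring
    rw [hΓ]
    have h2 : ((x i : ℂ) + 1) ≠ 0 := Nat.cast_add_one_ne_zero (x i)
    have hcast : (((i.val + 1) * (x i + 1) : ℕ) : ℂ)
        = ((i.val + 1 : ℕ) : ℂ) * ((x i : ℂ) + 1) := by push_cast; ring
    rw [hcast]
    generalize (∏ j, s j ^ x j / ((x j).factorial : ℂ)) = R
    generalize Complex.Gamma (b - ((i.val + 1 : ℕ) : ℂ) - ((∑ j, (j.val + 1) * x j : ℕ) : ℂ)) = G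
    field_simp
  have hsupp : Function.support F ⊆ Set.range e := by
    intro m hm
    by_contra h
    exact hm (hvanish m h)
  rw [← tsum_mul_left, ← hinj.tsum_eq hsupp]
  exact tsum_congr key

/-- The Kac–Schwarz lowering operator identity for the relative theory:
`Ψ_k + (n+1/2−z)·Ψ_{k−1} + Σ_{i=1}^r i·s_i·Ψ_{k−1−i} = (k−1)·Ψ_{k−1}`, where
`Ψ_j(z) = Σ_m (∏_i s_i^{m_i}/m_i!) Γ(z+j−n−1/2−Σ_i i·m_i)`. -/
theorem stmt15 (r : ℕ) (s : Fin r → ℂ) (n : ℂ) (k : ℤ) (z : ℂ)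
    (hz : ∀ m : ℤ, z - n - 1/2 ≠ (m : ℂ))
    (Ψ : ℤ → ℂ)
    (hΨ : ∀ j : ℤ, Ψ j = ∑' m : Fin r → ℕ,
      (∏ i, s i ^ m i / ((m i).factorial : ℂ)) *
        Complex.Gamma (z + (j : ℂ) - n - 1/2 - ((∑ i, (i.val + 1) * m i : ℕ) : ℂ))) :
    Ψ k + (n + 1/2 - z) * Ψ (k - 1)
      + (∑ i : Fin r, ((i.val + 1 : ℕ) : ℂ) * s i * Ψ (k - 1 - (i.val + 1 : ℤ)))
      = ((k : ℂ) - 1) * Ψ (k - 1) := by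
  classical
  set T : (Fin r → ℕ) → ℕ := fun m => ∑ i, (i.val + 1) * m i with hT
  set c : (Fin r → ℕ) → ℂ := fun m => ∏ i, s i ^ m i / ((m i).factorial : ℂ) with hc
  set S : ℤ → (Fin r → ℕ) → ℂ :=
    fun j m => c m * Complex.Gamma (z + (j : ℂ) - n - 1/2 - (T m : ℂ)) with hS
  have hΨ' : ∀ j : ℤ, Ψ j = ∑' m, S j m := hΨ
  have ha : ∀ j : ℤ, ∀ t : ℤ, z + (j : ℂ) - n - 1/2 ≠ (t : ℂ) := by
    intro j t h
    apply hz (t - j)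
    push_cast
    linear_combination h
  have hsum : ∀ j : ℤ, Summable (S j) := fun j =>
    summandSummable r s (z + (j : ℂ) - n - 1/2) (ha j)
  set w : (Fin r → ℕ) → ℂ := fun m => z + ((k - 1 : ℤ) : ℂ) - n - 1/2 - (T m : ℂ) with hw
  have hw0 : ∀ m, w m ≠ 0 := by
    intro m h
    apply ha (k - 1) ((T m : ℤ))
    simp only [hw] at h
    push_cast at h ⊢
    linear_combination h
  have hSk : ∀ m, S k m = w m * S (k - 1) m := by
    intro m
    have harg : z + (k : ℂ) - n - 1/2 - (T m : ℂ)
        = (z + ((k - 1 : ℤ) : ℂ) - n - 1/2 - (T m : ℂ)) + 1 := by push_cast; ring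
    show c m * Complex.Gamma (z + (k : ℂ) - n - 1/2 - (T m : ℂ)) = _
    rw [harg, Complex.Gamma_add_one _ (hw0 m)]
    show _ = (z + ((k - 1 : ℤ) : ℂ) - n - 1/2 - (T m : ℂ)) *
      (c m * Complex.Gamma (z + ((k - 1 : ℤ) : ℂ) - n - 1/2 - (T m : ℂ)))
    ring
  have hthird : ∀ i : Fin r,
      ((i.val + 1 : ℕ) : ℂ) * s i * Ψ (k - 1 - (i.val + 1 : ℤ))
        = ∑' m, (((i.val + 1) * m i : ℕ) : ℂ) * S (k - 1) m := by
    intro i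
    have hre := reindexSum r s (z + ((k - 1 : ℤ) : ℂ) - n - 1/2) i
    rw [hΨ' (k - 1 - (i.val + 1 : ℤ))]
    calc ((i.val + 1 : ℕ) : ℂ) * s i * ∑' m, S (k - 1 - (i.val + 1 : ℤ)) m
        = ((i.val + 1 : ℕ) : ℂ) * s i *
          ∑' m : Fin r → ℕ, c m * Complex.Gamma
            ((z + ((k - 1 : ℤ) : ℂ) - n - 1/2) - ((i.val + 1 : ℕ) : ℂ) - (T m : ℂ)) := by
          congr 1
          refine tsum_congr fun m => ?_
          show c m * Complex.Gamma (z + ((k - 1 - (i.val + 1 : ℤ) : ℤ) : ℂ) - n - 1/2 - (T m : ℂ))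
            = c m * Complex.Gamma _
          congr 1
          push_cast
          ring
      _ = ∑' m, (((i.val + 1) * m i : ℕ) : ℂ) * S (k - 1) m := hre.symm
  have hTS : Summable (fun m => ((T m : ℂ)) * S (k - 1) m) := by
    have h1 : Summable (fun m => (z + ((k - 1 : ℤ) : ℂ) - n - 1/2) * S (k - 1) m - S k m) :=
      ((hsum (k - 1)).mul_left _).sub (hsum k)
    refine h1.congr fun m => ?_
    rw [hSk m]
    simp only [hw]
    ring
  have hgsum : ∀ i : Fin r, Summable (fun m => (((i.val + 1) * m i : ℕ) : ℂ) * S (k - 1) m) := by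
    intro i
    refine Summable.of_norm_bounded (g := fun m => ‖(T m : ℂ) * S (k - 1) m‖) hTS.norm ?_
    intro m
    have hle : ((i.val + 1) * m i : ℕ) ≤ T m :=
      Finset.single_le_sum (f := fun j : Fin r => (j.val + 1) * m j)
        (fun _ _ => Nat.zero_le _) (Finset.mem_univ i)
    have h2 : ‖((T m : ℕ) : ℂ) * S (k - 1) m‖ = ((T m : ℕ) : ℝ) * ‖S (k - 1) m‖ := by
      rw [norm_mul, Complex.norm_natCast]
    have h3 : ‖(((i.val + 1) * m i : ℕ) : ℂ) * S (k - 1) m‖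
        = (((i.val + 1) * m i : ℕ) : ℝ) * ‖S (k - 1) m‖ := by
      rw [norm_mul, Complex.norm_natCast]
    show ‖(((i.val + 1) * m i : ℕ) : ℂ) * S (k - 1) m‖ ≤ ‖((T m : ℕ) : ℂ) * S (k - 1) m‖
    rw [h2, h3]
    exact mul_le_mul_of_nonneg_right (by exact_mod_cast hle) (norm_nonneg _)
  have hthirdsum : (∑ i : Fin r, ((i.val + 1 : ℕ) : ℂ) * s i * Ψ (k - 1 - (i.val + 1 : ℤ)))
      = ∑' m, ((T m : ℂ)) * S (k - 1) m := by
    rw [Finset.sum_congr rfl fun i _ => hthird i]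
    rw [← Summable.tsum_finsetSum (fun i _ => hgsum i)]
    refine tsum_congr fun m => ?_
    rw [← Finset.sum_mul]
    congr 1
    show ((∑ j : Fin r, (((j.val + 1) * m j : ℕ) : ℂ))) = ((T m : ℕ) : ℂ)
    simp only [hT]
    push_cast
    ring
  rw [hΨ' k, hΨ' (k - 1), hthirdsum, ← tsum_mul_left,
    ← Summable.tsum_add (hsum k) ((hsum (k - 1)).mul_left (n + 1/2 - z)),
    ← Summable.tsum_add ((hsum k).add ((hsum (k - 1)).mul_left (n + 1/2 - z))) hTS,
    ← tsum_mul_left]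
  refine tsum_congr fun m => ?_
  rw [hSk m]
  simp only [hw]
  push_cast
  ring
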